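/- arXiv:1902.06707 — 9 statements merged into one kernel-verified Lean document; each statement's English description precedes it below -/
import Mathlib

section
/- Let X be a topological space and κ an infinite cardinal. The following are equivalent: (i) for every subset A ⊆ X and every point x in the closure of A there exists a subset C ⊆ A with |C| ≤ κ such that x lies in the closure of C; (ii) for every topological space Y and every function f : X → Y, if for every subset C ⊆ X with |C| ≤ κ the restriction of f to C (with the subspace topology) is continuous, then f is continuous on X. -/
universe u v

/-- The `κ`-modification of a topology: a set is open iff its trace on every subset of
cardinality at most `κ` is open in the subspace topology. -/
def smallTop {X : Type u} [TopologicalSpace X] (κ : Cardinal.{u}) : TopologicalSpace X where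
  IsOpen U := ∀ C : Set X, Cardinal.mk C ≤ κ → IsOpen ((Subtype.val ⁻¹' U : Set C))
  isOpen_univ := fun C _ => isOpen_univ
  isOpen_inter := fun U V hU hV C hC => (hU C hC).inter (hV C hC)
  isOpen_sUnion := fun S hS C hC => by
    rw [Set.preimage_sUnion]
    exact isOpen_biUnion fun s hs => hS s hs C hC

/-- Let `X` be a topological space and `κ` an infinite cardinal. The following
are equivalent: (i) for every `A ⊆ X` and every `x ∈ closure A` there is `C ⊆ A` with `#C ≤ κ`
and `x ∈ closure C` (i.e. the tightness of `X` is at most `κ`); (ii) for every topological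
space `Y` and every `f : X → Y`, if the restriction of `f` to every subset of cardinality at
most `κ` (with the subspace topology) is continuous, then `f` is continuous. -/
theorem tightness_le_iff_colimit {X : Type u} [TopologicalSpace X]
    (κ : Cardinal.{u}) (hκ : Cardinal.aleph0 ≤ κ) :
    (∀ (A : Set X) (x : X), x ∈ closure A →
        ∃ C : Set X, C ⊆ A ∧ Cardinal.mk C ≤ κ ∧ x ∈ closure C) ↔
      (∀ (Y : Type max u v) [TopologicalSpace Y] (f : X → Y),
        (∀ C : Set X, Cardinal.mk C ≤ κ → Continuous fun c : C => f c) → Continuous f) := by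
  constructor
  · -- tightness → colimit
    intro ht Y _ f hf
    rw [continuous_iff_isClosed]
    intro F hF
    rw [← closure_subset_iff_isClosed]
    intro x hx
    obtain ⟨C, hCA, hCκ, hxC⟩ := ht (f ⁻¹' F) x hx
    set C' : Set X := insert x C with hC'
    have hC'κ : Cardinal.mk C' ≤ κ := by
      refine Cardinal.mk_insert_le.trans ?_
      calc Cardinal.mk C + 1 ≤ κ + 1 := add_le_add_left hCκ 1
        _ = κ := Cardinal.add_one_eq hκ
    have hg : Continuous fun c : C' => f c := hf C' hC'κ
    set x' : C' := ⟨x, Set.mem_insert _ _⟩ with hx'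
    have hxmem : x' ∈ closure (Subtype.val ⁻¹' C : Set C') := by
      rw [closure_subtype]
      have himg : (Subtype.val '' (Subtype.val ⁻¹' C : Set C')) = C := by
        rw [Set.image_preimage_eq_inter_range, Subtype.range_val]
        exact Set.inter_eq_left.2 (Set.subset_insert x C)
      rw [himg]
      exact hxC
    have hmem := image_closure_subset_closure_image (s := (Subtype.val ⁻¹' C : Set C')) hg
      (Set.mem_image_of_mem _ hxmem)
    have hsub : (fun c : C' => f c) '' (Subtype.val ⁻¹' C) ⊆ F := by
      rintro y ⟨c, hc, rfl⟩
      exact hCA hc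
    have hxF : f x ∈ closure F := closure_mono hsub hmem
    rwa [hF.closure_eq] at hxF
  · -- colimit → tightness
    intro h A x hx
    -- Step 1: every `smallTop κ`-open set is open
    have key : ∀ U : Set X, @IsOpen _ (smallTop κ) U → IsOpen U := by
      letI tY : TopologicalSpace (ULift.{v} X) := (smallTop κ).induced ULift.down
      have hup : Continuous (ULift.up : X → ULift.{v} X) := by
        apply h
        intro C hC
        refine continuous_induced_rng.2 ?_
        exact @Continuous.mk _ _ _ (smallTop κ) _ (fun U hU => hU C hC)
      intro U hU
      have h1 : IsOpen (ULift.down ⁻¹' U : Set (ULift.{v} X)) := ⟨U, hU, rfl⟩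
      have h2 := h1.preimage hup
      exact h2
    -- Step 2: the set of points in closures of small subsets of `A` is closed
    set D : Set X := {y | ∃ C : Set X, C ⊆ A ∧ Cardinal.mk C ≤ κ ∧ y ∈ closure C} with hD
    have hchoice : ∀ y : X, y ∈ D →
        ∃ C : Set X, C ⊆ A ∧ Cardinal.mk C ≤ κ ∧ y ∈ closure C := fun y hy => hy
    choose g hg1 hg2 hg3 using hchoice
    have hDopen : @IsOpen _ (smallTop κ) Dᶜ := by
      intro C0 hC0
      rw [Set.preimage_compl, ← isClosed_compl_iff, compl_compl]
      set E : Set X := ⋃ i : (D ∩ C0 : Set X), g i.1 i.2.1 with hE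
      have hEA : E ⊆ A := Set.iUnion_subset fun i => hg1 i.1 i.2.1
      have hEκ : Cardinal.mk E ≤ κ := by
        refine (Cardinal.mk_iUnion_le _).trans ?_
        have h1 : Cardinal.mk (D ∩ C0 : Set X) ≤ κ :=
          (Cardinal.mk_le_mk_of_subset Set.inter_subset_right).trans hC0
        have h2 : (⨆ i : (D ∩ C0 : Set X), Cardinal.mk (g i.1 i.2.1)) ≤ κ := by
          rcases isEmpty_or_nonempty (D ∩ C0 : Set X) with hemp | hne
          · rw [ciSup_of_empty]
            exact zero_le
          · exact ciSup_le' fun i => hg2 i.1 i.2.1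
        calc Cardinal.mk (D ∩ C0 : Set X) * ⨆ i : (D ∩ C0 : Set X), Cardinal.mk (g i.1 i.2.1)
            ≤ κ * κ := mul_le_mul' h1 h2
          _ = κ := Cardinal.mul_eq_self hκ
      have heq : (Subtype.val ⁻¹' D : Set C0) = Subtype.val ⁻¹' closure E := by
        ext c
        simp only [Set.mem_preimage]
        constructor
        · intro hc
          have : (c : X) ∈ closure (g c.1 hc) := hg3 c.1 hc
          refine closure_mono ?_ this
          exact Set.subset_iUnion (fun i : (D ∩ C0 : Set X) => g i.1 i.2.1) ⟨c.1, hc, c.2⟩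
        · intro hc
          exact ⟨E, hEA, hEκ, hc⟩
      rw [heq]
      exact isClosed_closure.preimage continuous_subtype_val
    have hDclosed : IsClosed D := by
      rw [← isOpen_compl_iff]
      exact key Dᶜ hDopen
    have hAD : A ⊆ D := fun a ha =>
      ⟨{a}, Set.singleton_subset_iff.2 ha,
        (Cardinal.mk_singleton a).le.trans (Cardinal.one_le_aleph0.trans hκ),
        subset_closure rfl⟩
    have : x ∈ D := by
      have := closure_mono hAD hx
      rwa [hDclosed.closure_eq] at this
    exact this
end

section
/- Let κ be an infinite cardinal, (ι, ≤) a κ-long directed preorder, X a set, s : ι → Set X a monotone family with ⋃_α s(α) = X, and for each α a topology t_α on s(α) such that for α ≤ β the inclusion (s(α), t_α) → (s(β), t_β) is a topological embedding. Let T be the colimit space topology on X, and let S be an admissible topology on X. Then the following are equivalent: (i) the tightness of (X, S) is at most κ; (ii) S = T and the tightness of each (s(α), t_α) is at most κ. -/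
universe u

open TopologicalSpace

/-- The tightness of `X` (with the topology `t`) is at most `κ`. -/
def TightnessLE {X : Type u} (t : TopologicalSpace X) (κ : Cardinal.{u}) : Prop :=
  ∀ (A : Set X) (x : X), x ∈ @closure X t A →
    ∃ C : Set X, C ⊆ A ∧ Cardinal.mk C ≤ κ ∧ x ∈ @closure X t C

/-- Tightness `≤ κ` is inherited by subspaces (embeddings). -/
lemma tightnessLE_of_isEmbedding {Y X : Type u} {tY : TopologicalSpace Y}
    {tX : TopologicalSpace X} {κ : Cardinal.{u}} {f : Y → X}
    (hf : @Topology.IsEmbedding Y X tY tX f) (h : TightnessLE tX κ) :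
    TightnessLE tY κ := by
  letI := tY; letI := tX
  intro A y hy
  rw [hf.closure_eq_preimage_closure_image] at hy
  obtain ⟨C, hCA, hCκ, hyC⟩ := h _ _ hy
  refine ⟨f ⁻¹' C, ?_, (Cardinal.mk_preimage_of_injective f C hf.injective).trans hCκ, ?_⟩
  · intro c hc
    obtain ⟨a, ha, hac⟩ := hCA hc
    rwa [← hf.injective hac]
  · rw [hf.closure_eq_preimage_closure_image,
      Set.image_preimage_eq_of_subset (hCA.trans (Set.image_subset_range f A))]
    exact hyC

/-- Let `κ` be an infinite cardinal, `(ι, ≤)` a `κ`-long directed preorder,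
`X` a set, `s : ι → Set X` a monotone family with union `X`, and for each `α` a topology `t α`
on `s α` such that for `α ≤ β` the inclusion `(s α, t α) → (s β, t β)` is an embedding.
Let `T` be the colimit space topology on `X` (the finest topology making all inclusions
continuous, i.e. the supremum of the coinduced topologies), and `S` an admissible topology on
`X` (one for which each inclusion `(s α, t α) → (X, S)` is an embedding).  Then the tightness
of `(X, S)` is at most `κ` iff `S = T` and each `(s α, t α)` has tightness at most `κ`. -/
theorem admissible_topology_eq_colimit_iff_tight
    {ι : Type u} [Preorder ι] [IsDirected ι (· ≤ ·)] {X : Type u}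
    (κ : Cardinal.{u}) (hκ : Cardinal.aleph0 ≤ κ)
    (hlong : ∀ C : Set ι, Cardinal.mk C ≤ κ → ∃ ub, ∀ i ∈ C, i ≤ ub)
    (s : ι → Set X) (hs : Monotone s) (hsU : ⋃ α, s α = Set.univ)
    (t : ∀ α, TopologicalSpace (s α))
    (hemb : ∀ α β (h : α ≤ β),
      @Topology.IsEmbedding _ _ (t α) (t β) (Set.inclusion (hs h)))
    (S : TopologicalSpace X)
    (hadm : ∀ α, @Topology.IsEmbedding _ _ (t α) S (Subtype.val : s α → X)) :
    TightnessLE S κ ↔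
      (S = ⨆ α, TopologicalSpace.coinduced (Subtype.val : s α → X) (t α)) ∧
        ∀ α, TightnessLE (t α) κ := by
  classical
  have hmem : ∀ y : X, ∃ i, y ∈ s i := fun y => Set.mem_iUnion.mp (hsU ▸ Set.mem_univ y)
  constructor
  · intro h
    refine ⟨le_antisymm ?_ (iSup_le fun α => continuous_iff_coinduced_le.mp
      (hadm α).continuous), fun α => tightnessLE_of_isEmbedding (hadm α) h⟩
    refine isOpen_implies_isOpen_iff.mp ?_
    intro U hU
    letI := S
    rw [← isClosed_compl_iff, ← closure_subset_iff_isClosed]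
    intro x hx
    obtain ⟨C, hCU, hCκ, hxC⟩ := h Uᶜ x hx
    choose g hg using fun c : C => hmem c
    obtain ⟨γ, hγ⟩ := hmem x
    have hcard : Cardinal.mk ↥(Set.range g ∪ {γ} : Set ι) ≤ κ := by
      refine le_trans (Cardinal.mk_union_le _ _) ?_
      have h1 : Cardinal.mk ↥(Set.range g) ≤ κ := Cardinal.mk_range_le.trans hCκ
      have h2 : Cardinal.mk ↥({γ} : Set ι) ≤ κ := by
        simpa using le_trans Cardinal.one_le_aleph0 hκ
      calc Cardinal.mk ↥(Set.range g) + Cardinal.mk ↥({γ} : Set ι)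
          ≤ κ + κ := add_le_add h1 h2
        _ = κ := Cardinal.add_eq_self hκ
    obtain ⟨δ, hδ⟩ := hlong _ hcard
    have hxδ : x ∈ s δ := hs (hδ γ (Set.mem_union_right _ rfl)) hγ
    have hCδ : C ⊆ s δ := fun c hc =>
      hs (hδ _ (Set.mem_union_left _ ⟨⟨c, hc⟩, rfl⟩)) (hg ⟨c, hc⟩)
    have hUδ : @IsOpen _ (t δ) ((Subtype.val : s δ → X) ⁻¹' U) :=
      isOpen_coinduced.mp (isOpen_iSup_iff.mp hU δ)
    have hclosed : @IsClosed _ (t δ) ((Subtype.val : s δ → X) ⁻¹' Uᶜ) := by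
      rw [Set.preimage_compl]
      exact (@isClosed_compl_iff _ (t δ) _).mpr hUδ
    have key : (⟨x, hxδ⟩ : s δ) ∈ @closure _ (t δ) (Subtype.val ⁻¹' C) := by
      rw [(hadm δ).closure_eq_preimage_closure_image,
        Set.image_preimage_eq_of_subset (by rw [Subtype.range_coe]; exact hCδ)]
      exact hxC
    exact @closure_minimal _ (t δ) _ _ (Set.preimage_mono hCU) hclosed _ key
  · rintro ⟨hST, ht⟩
    intro A x hx
    letI := S
    set D : Set X := {y | ∃ C : Set X, C ⊆ A ∧ Cardinal.mk C ≤ κ ∧ y ∈ closure C} with hD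
    have hAD : A ⊆ D := fun y hy =>
      ⟨{y}, Set.singleton_subset_iff.mpr hy,
        by simpa using le_trans Cardinal.one_le_aleph0 hκ, subset_closure rfl⟩
    have hDclosed : IsClosed D := by
      have h1 : @IsClosed X
          (⨆ α, TopologicalSpace.coinduced (Subtype.val : s α → X) (t α)) D := by
        refine (@isOpen_compl_iff X D (⨆ α, TopologicalSpace.coinduced (Subtype.val : s α → X) (t α))).mp ?_
        refine isOpen_iSup_iff.mpr fun α => ?_
        refine isOpen_coinduced.mpr ?_
        rw [Set.preimage_compl]
        refine (@isOpen_compl_iff _ _ (t α)).mpr ?_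
        refine (@closure_subset_iff_isClosed _ (t α) _).mp ?_
        intro y hy
        obtain ⟨E, hED, hEκ, hyE⟩ := ht α _ y hy
        have hchoice : ∀ e : E, ∃ C : Set X, C ⊆ A ∧ Cardinal.mk C ≤ κ ∧
            ((e : s α) : X) ∈ closure C := fun e => hED e.2
        choose f hf1 hf2 hf3 using hchoice
        have hCA : (⋃ e : E, f e) ⊆ A := Set.iUnion_subset hf1
        have hCκ : Cardinal.mk ↥(⋃ e : E, f e) ≤ κ := by
          refine le_trans (Cardinal.mk_iUnion_le f) ?_
          calc Cardinal.mk ↥E * ⨆ e : E, Cardinal.mk ↥(f e)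
              ≤ κ * κ := mul_le_mul' hEκ (ciSup_le' hf2)
            _ = κ := Cardinal.mul_eq_self hκ
        have hsubE : Subtype.val '' E ⊆ closure (⋃ e : E, f e) := by
          rintro _ ⟨e, he, rfl⟩
          exact closure_mono (Set.subset_iUnion f ⟨e, he⟩) (hf3 ⟨e, he⟩)
        rw [(hadm α).closure_eq_preimage_closure_image] at hyE
        exact ⟨⋃ e : E, f e, hCA, hCκ,
          Set.preimage_mono (closure_minimal hsubE isClosed_closure) hyE⟩
      rwa [← hST] at h1
    obtain ⟨C, hCA, hCκ, hxC⟩ := closure_minimal hAD hDclosed hx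
    exact ⟨C, hCA, hCκ, hxC⟩
end

section
/- Let κ be an infinite cardinal, (ι, ≤) a κ-long directed preorder, G a group, and s : ι → Set X a monotone family of subgroups G_α of G with union G, where each G_α carries a group topology making it a topological group and for α ≤ β the inclusion G_α → G_β is a closed topological embedding. Endow G with the colimit space topology T (the finest topology making each inclusion G_α → G continuous). If the product space (G, T) × (G, T) has tightness at most κ, then (G, T) is a topological group; in particular the multiplication map (G, T) × (G, T) → (G, T) is jointly continuous. -/
universe u

open TopologicalSpace Topology

section Aux

variable {ι : Type u} [Preorder ι] [IsDirected ι (· ≤ ·)] {G : Type u} [Group G]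
  {s : ι → Subgroup G}

/-- A subset of `G` contained in one of the pieces whose trace on that piece is closed
is closed in the colimit topology. -/
lemma aux_isClosed (hs : Monotone s) (t : ∀ α, TopologicalSpace (s α))
    (hemb : ∀ α β (h : α ≤ β),
      @Topology.IsClosedEmbedding _ _ (t α) (t β) (Subgroup.inclusion (hs h)))
    (α : ι) (A : Set G) (hA : A ⊆ (s α : Set G))
    (h : IsClosed[t α] ((Subtype.val : s α → G) ⁻¹' A)) :
    IsClosed[⨆ β, TopologicalSpace.coinduced (Subtype.val : s β → G) (t β)] A := by
  rw [isClosed_iSup_iff]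
  intro β
  rw [isClosed_coinduced]
  obtain ⟨γ, hαγ, hβγ⟩ := directed_of (· ≤ ·) α β
  have h1 : IsClosed[t γ]
      ((Subgroup.inclusion (hs hαγ)) '' ((Subtype.val : s α → G) ⁻¹' A)) :=
    (hemb α γ hαγ).isClosedMap _ h
  have h2 : (Subgroup.inclusion (hs hαγ)) '' ((Subtype.val : s α → G) ⁻¹' A)
      = (Subtype.val : s γ → G) ⁻¹' A := by
    ext x
    constructor
    · rintro ⟨y, hy, rfl⟩; exact hy
    · intro hx; exact ⟨⟨(x : G), hA hx⟩, hx, rfl⟩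
  rw [h2] at h1
  have h3 : (Subtype.val : s β → G) ⁻¹' A
      = (Subgroup.inclusion (hs hβγ)) ⁻¹' ((Subtype.val : s γ → G) ⁻¹' A) := rfl
  rw [h3]
  have hc : Continuous[t β, t γ] (Subgroup.inclusion (hs hβγ)) := (hemb β γ hβγ).continuous
  exact @IsClosed.preimage _ _ (t β) (t γ) _ hc _ h1

set_option linter.unusedSectionVars false in
lemma aux_val_continuous (t : ∀ α, TopologicalSpace (s α)) (α : ι) :
    Continuous[t α, ⨆ β, TopologicalSpace.coinduced (Subtype.val : s β → G) (t β)]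
      (Subtype.val : s α → G) :=
  continuous_iff_coinduced_le.2
    (le_iSup (fun β => TopologicalSpace.coinduced (Subtype.val : s β → G) (t β)) α)

/-- Each piece embeds in the colimit. -/
lemma aux_isEmbedding (hs : Monotone s) (t : ∀ α, TopologicalSpace (s α))
    (hemb : ∀ α β (h : α ≤ β),
      @Topology.IsClosedEmbedding _ _ (t α) (t β) (Subgroup.inclusion (hs h)))
    (α : ι) :
    @Topology.IsEmbedding _ _ (t α)
      (⨆ β, TopologicalSpace.coinduced (Subtype.val : s β → G) (t β))
      (Subtype.val : s α → G) := by
  set T' := ⨆ β, TopologicalSpace.coinduced (Subtype.val : s β → G) (t β) with hT'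
  refine ⟨⟨le_antisymm ?_ ?_⟩, Subtype.val_injective⟩
  · exact continuous_iff_le_induced.1 (aux_val_continuous t α)
  · rw [TopologicalSpace.le_def]
    intro U hU
    show IsOpen[TopologicalSpace.induced (Subtype.val : s α → G) T'] U
    rw [@isOpen_induced_iff _ _ T' U (Subtype.val : s α → G)]
    have hBcl : IsClosed[T'] ((Subtype.val : s α → G) '' Uᶜ) := by
      apply aux_isClosed hs t hemb α
      · rintro x ⟨y, _, rfl⟩; exact y.2
      · rw [Set.preimage_image_eq _ Subtype.val_injective]
        exact hU.isClosed_compl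
    refine ⟨((Subtype.val : s α → G) '' Uᶜ)ᶜ, hBcl.isOpen_compl, ?_⟩
    rw [Set.preimage_compl, Set.preimage_image_eq _ Subtype.val_injective, compl_compl]

end Aux

/-- Let `κ` be an infinite cardinal, `(ι, ≤)` a `κ`-long directed preorder,
`G` a group and `{G_α}` a monotone family of subgroups with union `G`, each carrying a group
topology making it a topological group, the bonding inclusions being closed embeddings.
If `T` is the colimit space topology on `G` and `(G, T) × (G, T)` has tightness at most `κ`,
then `(G, T)` is a topological group; in particular multiplication is jointly continuous. -/
theorem colimit_topologicalGroup_of_tight_sq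
    {ι : Type u} [Preorder ι] [IsDirected ι (· ≤ ·)] {G : Type u} [Group G]
    (κ : Cardinal.{u}) (hκ : Cardinal.aleph0 ≤ κ)
    (hlong : ∀ C : Set ι, Cardinal.mk C ≤ κ → ∃ ub, ∀ i ∈ C, i ≤ ub)
    (s : ι → Subgroup G) (hs : Monotone s) (hsU : ∀ g : G, ∃ α, g ∈ s α)
    (t : ∀ α, TopologicalSpace (s α))
    (htg : ∀ α, @IsTopologicalGroup (s α) (t α) _)
    (hemb : ∀ α β (h : α ≤ β),
      @Topology.IsClosedEmbedding _ _ (t α) (t β) (Subgroup.inclusion (hs h)))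
    (T : TopologicalSpace G)
    (hT : T = ⨆ α, TopologicalSpace.coinduced (Subtype.val : s α → G) (t α))
    (htight : TightnessLE (@instTopologicalSpaceProd G G T T) κ) :
    @IsTopologicalGroup G T _ ∧
      @Continuous (G × G) G (@instTopologicalSpaceProd G G T T) T
        (fun p => p.1 * p.2) := by
  subst hT
  letI tG : TopologicalSpace G := ⨆ α, TopologicalSpace.coinduced (Subtype.val : s α → G) (t α)
  have hone : (1 : Cardinal) ≤ κ := le_trans Cardinal.one_le_aleph0 hκ
  -- joint continuity of multiplication
  have hmul : Continuous fun p : G × G => p.1 * p.2 := by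
    rw [continuous_iff_isClosed]
    intro F hF
    apply isClosed_of_closure_subset
    rintro ⟨x, y⟩ hxy
    obtain ⟨C, hCsub, hCcard, hxyC⟩ := htight _ _ hxy
    obtain ⟨αx, hx⟩ := hsU x
    obtain ⟨αy, hy⟩ := hsU y
    choose f1 hf1 using fun c : C => hsU (c : G × G).1
    choose f2 hf2 using fun c : C => hsU (c : G × G).2
    have hIcard : Cardinal.mk
        (insert αx (insert αy (Set.range f1 ∪ Set.range f2)) : Set ι) ≤ κ := by
      have h1 : Cardinal.mk (Set.range f1) ≤ κ := Cardinal.mk_range_le.trans hCcard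
      have h2 : Cardinal.mk (Set.range f2) ≤ κ := Cardinal.mk_range_le.trans hCcard
      have h3 : Cardinal.mk (Set.range f1 ∪ Set.range f2 : Set ι) ≤ κ :=
        (Cardinal.mk_union_le _ _).trans (Cardinal.add_le_of_le hκ h1 h2)
      have h5 : Cardinal.mk (insert αy (Set.range f1 ∪ Set.range f2) : Set ι) ≤ κ :=
        Cardinal.mk_insert_le.trans (Cardinal.add_le_of_le hκ h3 hone)
      exact Cardinal.mk_insert_le.trans (Cardinal.add_le_of_le hκ h5 hone)
    obtain ⟨β, hβ⟩ := hlong _ hIcard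
    have hxβ : x ∈ s β := hs (hβ αx (Set.mem_insert _ _)) hx
    have hyβ : y ∈ s β := hs (hβ αy (Set.mem_insert_of_mem _ (Set.mem_insert _ _))) hy
    have hC1 : ∀ c ∈ C, c.1 ∈ s β ∧ c.2 ∈ s β := by
      intro c hc
      constructor
      · exact hs (hβ (f1 ⟨c, hc⟩)
          (Set.mem_insert_of_mem _ (Set.mem_insert_of_mem _ (Or.inl ⟨_, rfl⟩)))) (hf1 ⟨c, hc⟩)
      · exact hs (hβ (f2 ⟨c, hc⟩)
          (Set.mem_insert_of_mem _ (Set.mem_insert_of_mem _ (Or.inr ⟨_, rfl⟩)))) (hf2 ⟨c, hc⟩)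
    letI := t β
    haveI : IsTopologicalGroup (s β) := htg β
    have hembβ : Topology.IsEmbedding ((Subtype.val : s β → G)) := aux_isEmbedding hs t hemb β
    have hvalc : Continuous ((Subtype.val : s β → G)) := hembβ.continuous
    have hee : Topology.IsEmbedding (Prod.map (Subtype.val : s β → G) Subtype.val) :=
      hembβ.prodMap hembβ
    set e : s β × s β → G × G := Prod.map Subtype.val Subtype.val with he
    set D : Set (s β × s β) := e ⁻¹' C with hD
    have hCr : C ⊆ Set.range e := by
      intro c hc
      rcases hC1 c hc with ⟨h1, h2⟩
      exact ⟨(⟨c.1, h1⟩, ⟨c.2, h2⟩), Prod.ext rfl rfl⟩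
    have heD : e '' D = C := Set.image_preimage_eq_of_subset hCr
    have hp0 : ((⟨x, hxβ⟩ : s β), (⟨y, hyβ⟩ : s β)) ∈ closure D := by
      rw [← heD] at hxyC
      rw [hee.closure_eq_preimage_closure_image D]
      exact hxyC
    have hmulc : Continuous fun p : s β × s β => p.1 * p.2 := continuous_mul
    have hsubF : (fun p : s β × s β => p.1 * p.2) '' D ⊆ (Subtype.val : s β → G) ⁻¹' F := by
      rintro _ ⟨p, hp, rfl⟩
      have := hCsub hp
      simpa [he] using this
    have hFcl : IsClosed ((Subtype.val : s β → G) ⁻¹' F) := hF.preimage hvalc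
    have hmem : (⟨x, hxβ⟩ * ⟨y, hyβ⟩ : s β) ∈ (Subtype.val : s β → G) ⁻¹' F := by
      have h7 := image_closure_subset_closure_image hmulc (Set.mem_image_of_mem _ hp0)
      exact hFcl.closure_subset (closure_mono hsubF h7)
    simpa using hmem
  -- tightness of `G` itself
  have htight1 : ∀ (A : Set G) (x : G), x ∈ closure A →
      ∃ C : Set G, C ⊆ A ∧ Cardinal.mk C ≤ κ ∧ x ∈ closure C := by
    intro A x hx
    have h1 : (x, (1 : G)) ∈ closure (A ×ˢ ({1} : Set G)) := by
      rw [closure_prod_eq]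
      exact ⟨hx, subset_closure rfl⟩
    obtain ⟨C, hC, hcard, hxC⟩ := htight _ _ h1
    refine ⟨Prod.fst '' C, ?_, Cardinal.mk_image_le.trans hcard, ?_⟩
    · rintro _ ⟨c, hc, rfl⟩; exact (hC hc).1
    · exact image_closure_subset_closure_image continuous_fst
        (Set.mem_image_of_mem Prod.fst hxC)
  -- continuity of inversion
  have hinv : Continuous fun g : G => g⁻¹ := by
    rw [continuous_iff_isClosed]
    intro F hF
    apply isClosed_of_closure_subset
    intro x hx
    obtain ⟨C, hCsub, hCcard, hxC⟩ := htight1 _ _ hx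
    obtain ⟨αx, hxα⟩ := hsU x
    choose f1 hf1 using fun c : C => hsU (c : G)
    have hIcard : Cardinal.mk (insert αx (Set.range f1) : Set ι) ≤ κ := by
      have h1 : Cardinal.mk (Set.range f1) ≤ κ := Cardinal.mk_range_le.trans hCcard
      exact Cardinal.mk_insert_le.trans (Cardinal.add_le_of_le hκ h1 hone)
    obtain ⟨β, hβ⟩ := hlong _ hIcard
    have hxβ : x ∈ s β := hs (hβ αx (Set.mem_insert _ _)) hxα
    have hCβ : C ⊆ (s β : Set G) := by
      intro c hc
      exact hs (hβ (f1 ⟨c, hc⟩) (Set.mem_insert_of_mem _ ⟨_, rfl⟩)) (hf1 ⟨c, hc⟩)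
    letI := t β
    haveI : IsTopologicalGroup (s β) := htg β
    have hembβ : Topology.IsEmbedding ((Subtype.val : s β → G)) := aux_isEmbedding hs t hemb β
    have hvalc : Continuous ((Subtype.val : s β → G)) := hembβ.continuous
    set D : Set (s β) := (Subtype.val : s β → G) ⁻¹' C with hD
    have heD : (Subtype.val : s β → G) '' D = C :=
      Set.image_preimage_eq_of_subset (by rwa [Subtype.range_val])
    have hp0 : (⟨x, hxβ⟩ : s β) ∈ closure D := by
      rw [← heD] at hxC
      rw [hembβ.closure_eq_preimage_closure_image D]
      exact hxC
    have hinvc : Continuous fun a : s β => a⁻¹ := continuous_inv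
    have hsubF : (fun a : s β => a⁻¹) '' D ⊆ (Subtype.val : s β → G) ⁻¹' F := by
      rintro _ ⟨p, hp, rfl⟩
      have := hCsub hp
      simpa using this
    have hFcl : IsClosed ((Subtype.val : s β → G) ⁻¹' F) := hF.preimage hvalc
    have hmem : ((⟨x, hxβ⟩ : s β)⁻¹ : s β) ∈ (Subtype.val : s β → G) ⁻¹' F := by
      have h7 := image_closure_subset_closure_image hinvc (Set.mem_image_of_mem _ hp0)
      exact hFcl.closure_subset (closure_mono hsubF h7)
    simpa using hmem
  haveI : ContinuousMul G := ⟨hmul⟩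
  haveI : ContinuousInv G := ⟨hinv⟩
  exact ⟨{}, hmul⟩
end

section
/- Let {G_j}_{j ∈ J} be a family of metrizable topological groups. For each countable subset D ⊆ J let G_D = ∏_{j ∈ D} G_j × ∏_{j ∉ D} {e_j}, regarded as a subgroup of ∏_{j ∈ J} G_j with the product topology. Then the colimit space topology on the union ⋃_{D ∈ [J]^{≤ω}} G_D (the finest topology making each inclusion G_D → ⋃ G_D continuous) coincides with the subspace topology inherited from the product ∏_{j ∈ J} G_j; consequently this colimit space topology is a group topology, and the colimit of the family {G_D} in topological spaces is the Σ-product Σ_{j ∈ J} (G_j, e_j), the subgroup of ∏ G_j consisting of elements with countable support. -/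
open TopologicalSpace Topology Filter

variable {J : Type*} (G : J → Type*) [∀ j, Group (G j)] [∀ j, TopologicalSpace (G j)]

/-- The Σ-product of the groups `G j`: the subgroup of `∀ j, G j` consisting of elements with
countable support. -/
def sigmaProdSubgroup : Subgroup (∀ j, G j) where
  carrier := {x | {j | x j ≠ 1}.Countable}
  one_mem' := by
    show ({j | (1 : ∀ j, G j) j ≠ 1}).Countable
    have : {j | (1 : ∀ j, G j) j ≠ 1} = ∅ := by ext j; simp
    rw [this]
    exact Set.countable_empty
  mul_mem' := by
    intro a b ha hb
    refine Set.Countable.mono ?_ (ha.union hb)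
    intro j hj
    by_contra hc
    simp only [Set.mem_union, Set.mem_setOf_eq, not_or, not_not] at hc
    exact hj (by simp [Pi.mul_apply, hc.1, hc.2])
  inv_mem' := by
    intro a ha
    refine Set.Countable.mono ?_ ha
    intro j hj
    simp only [Set.mem_setOf_eq, Pi.inv_apply, ne_eq, inv_eq_one] at hj ⊢
    exact hj

/-- For a countable `D ⊆ J`, `G_D = ∏_{j ∈ D} G j × ∏_{j ∉ D} {1}` as a subset of the product. -/
def sigmaPiece (D : Set J) : Set (∀ j, G j) := {x | ∀ j ∉ D, x j = 1}

theorem sigmaPiece_subset (D : Set J) (hD : D.Countable) :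
    sigmaPiece G D ⊆ (sigmaProdSubgroup G : Set (∀ j, G j)) := fun x hx =>
  Set.Countable.mono (fun j hj => by by_contra hc; exact hj (hx j hc)) hD

/-- Let `{G j}` be a family of metrizable topological groups, and for each
countable `D ⊆ J` let `G_D = ∏_{j ∈ D} G j × ∏_{j ∉ D} {1}` carry the product (= subspace)
topology. Then the union of the `G_D` is the Σ-product of the `G j`, and the colimit space
topology on it (the finest topology making each inclusion `G_D → ⋃ G_D` continuous, i.e. the
supremum of the coinduced topologies) coincides with the subspace topology inherited from
`∀ j, G j`; consequently it is a group topology. -/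
theorem colimit_sigmaProd [∀ j, IsTopologicalGroup (G j)] [∀ j, MetrizableSpace (G j)] :
    (⋃ (D : Set J) (_ : D.Countable), sigmaPiece G D)
        = (sigmaProdSubgroup G : Set (∀ j, G j)) ∧
      (⨆ (D : Set J) (hD : D.Countable),
          TopologicalSpace.coinduced (Set.inclusion (sigmaPiece_subset G D hD))
            (inferInstance : TopologicalSpace (sigmaPiece G D)))
        = (inferInstance : TopologicalSpace (sigmaProdSubgroup G)) ∧
      @IsTopologicalGroup (sigmaProdSubgroup G)
        (⨆ (D : Set J) (hD : D.Countable),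
          TopologicalSpace.coinduced (Set.inclusion (sigmaPiece_subset G D hD))
            (inferInstance : TopologicalSpace (sigmaPiece G D))) _ := by
  have hunion : (⋃ (D : Set J) (_ : D.Countable), sigmaPiece G D)
      = (sigmaProdSubgroup G : Set (∀ j, G j)) := by
    ext z
    simp only [Set.mem_iUnion]
    constructor
    · rintro ⟨D, hD, hz⟩
      exact sigmaPiece_subset G D hD hz
    · intro hz
      exact ⟨{j | z j ≠ 1}, hz, fun j hj => not_not.mp hj⟩
  have heasy : (⨆ (D : Set J) (hD : D.Countable),
      TopologicalSpace.coinduced (Set.inclusion (sigmaPiece_subset G D hD))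
        (inferInstance : TopologicalSpace (sigmaPiece G D)))
      ≤ (inferInstance : TopologicalSpace (sigmaProdSubgroup G)) := by
    refine iSup_le fun D => iSup_le fun hD => ?_
    exact continuous_iff_coinduced_le.mp (continuous_inclusion (sigmaPiece_subset G D hD))
  have hhard : (inferInstance : TopologicalSpace (sigmaProdSubgroup G))
      ≤ ⨆ (D : Set J) (hD : D.Countable),
          TopologicalSpace.coinduced (Set.inclusion (sigmaPiece_subset G D hD))
            (inferInstance : TopologicalSpace (sigmaPiece G D)) := by
    classical
    rw [TopologicalSpace.le_def]
    intro U hU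
    simp only [isOpen_iSup_iff, isOpen_coinduced] at hU
    rw [isOpen_iff_mem_nhds]
    intro x hx
    by_contra hxU
    obtain hJ | ⟨⟨j₀⟩⟩ := isEmpty_or_nonempty J
    · haveI : Subsingleton (∀ j, G j) := ⟨fun a b => funext fun j => hJ.elim j⟩
      have hUuniv : U = Set.univ := Set.eq_univ_of_forall fun y => by
        rwa [Subsingleton.elim y x]
      exact hxU (hUuniv ▸ Filter.univ_mem)
    -- choose antitone neighborhood bases at the coordinates of x
    choose B hB using fun j => (𝓝 ((x : ∀ j, G j) j)).exists_antitone_basis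
    have hBmem : ∀ j n, B j n ∈ 𝓝 ((x : ∀ j, G j) j) :=
      fun j n => (hB j).1.mem_of_mem trivial
    have hnot : ∀ V ∈ 𝓝 (x : ∀ j, G j), ¬ (Subtype.val ⁻¹' V ⊆ U) := by
      intro V hV hsub
      refine hxU ?_
      rw [nhds_subtype]
      exact Filter.mem_comap.mpr ⟨V, hV, hsub⟩
    -- pick counterexample points in small boxes
    have pick : ∀ (F : Finset J) (n : ℕ), ∃ y : sigmaProdSubgroup G,
        (∀ j ∈ F, (y : ∀ j, G j) j ∈ B j n) ∧ y ∉ U := by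
      intro F n
      have hV : (Set.pi ↑F fun j => B j n) ∈ 𝓝 (x : ∀ j, G j) :=
        set_pi_mem_nhds F.finite_toSet fun j _ => hBmem j n
      obtain ⟨y, hy1, hy2⟩ := Set.not_subset.mp (hnot _ hV)
      exact ⟨y, fun j hj => hy1 j (Finset.mem_coe.mpr hj), hy2⟩
    choose Yp hY1 hY2 using pick
    -- enumerate supports
    choose enum henum using fun z : sigmaProdSubgroup G =>
      (Set.Countable.insert j₀
        (z.2 : {j | (z : ∀ j, G j) j ≠ 1}.Countable)).exists_eq_range
        (Set.insert_nonempty _ _)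
    let efun : (ℕ → sigmaProdSubgroup G) → ℕ → ℕ → J := fun g m =>
      Nat.casesOn m (enum x) fun m' => enum (g m')
    let Fs : (ℕ → sigmaProdSubgroup G) → ℕ → Finset J := fun g n =>
      (Finset.range (n + 1) ×ˢ Finset.range (n + 1)).image fun p => efun g p.1 p.2
    -- recursive construction of the sequence
    let g : ℕ → ℕ → sigmaProdSubgroup G := fun n =>
      Nat.rec (fun _ => x) (fun n gn m => if m = n then Yp (Fs gn n) n else gn m) n
    let Y : ℕ → sigmaProdSubgroup G := fun n => g (n + 1) n
    have hg : ∀ n m, m < n → g n m = Y m := by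
      intro n
      induction n with
      | zero => intro m hm; exact absurd hm (Nat.not_lt_zero m)
      | succ n ih =>
        intro m hm
        show (if m = n then Yp (Fs (g n) n) n else g n m) = Y m
        rcases eq_or_lt_of_le (Nat.lt_succ_iff.mp hm) with h | h
        · subst h; rfl
        · rw [if_neg (Nat.ne_of_lt h), ih m h]
    have hFs : ∀ n, Fs (g n) n = Fs Y n := by
      intro n
      refine Finset.image_congr ?_
      rintro ⟨m, k⟩ hp
      rw [Finset.mem_coe, Finset.mem_product, Finset.mem_range, Finset.mem_range] at hp
      show efun (g n) m k = efun Y m k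
      cases m with
      | zero => rfl
      | succ m' =>
        show enum (g n m') k = enum (Y m') k
        rw [hg n m' (by omega)]
    have hYdef : ∀ n, Y n = Yp (Fs Y n) n := by
      intro n
      show (if n = n then Yp (Fs (g n) n) n else g n n) = Yp (Fs Y n) n
      rw [if_pos rfl, hFs n]
    -- membership of efun values in the finsets
    have hmemFs : ∀ (m k n : ℕ), m ≤ n → k ≤ n → efun Y m k ∈ Fs Y n := by
      intro m k n hm hk
      refine Finset.mem_image.mpr ⟨(m, k), ?_, rfl⟩
      rw [Finset.mem_product, Finset.mem_range, Finset.mem_range]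
      omega
    -- supports are covered by the enumerations
    have hsuppx : ∀ j, (x : ∀ j, G j) j ≠ 1 → ∃ k, efun Y 0 k = j := by
      intro j hj
      have : j ∈ Set.range (enum x) := (henum x) ▸ Set.mem_insert_of_mem _ hj
      obtain ⟨k, hk⟩ := this
      exact ⟨k, hk⟩
    have hsuppY : ∀ m j, ((Y m : ∀ j, G j)) j ≠ 1 → ∃ k, efun Y (m + 1) k = j := by
      intro m j hj
      have : j ∈ Set.range (enum (Y m)) := (henum (Y m)) ▸ Set.mem_insert_of_mem _ hj
      obtain ⟨k, hk⟩ := this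
      exact ⟨k, hk⟩
    -- the countable set D
    set D : Set J := Set.range (fun p : ℕ × ℕ => efun Y p.1 p.2) with hDdef
    have hD : D.Countable := Set.countable_range _
    have hxD : (x : ∀ j, G j) ∈ sigmaPiece G D := by
      intro j hj
      by_contra h
      obtain ⟨k, hk⟩ := hsuppx j h
      exact hj ⟨(0, k), hk⟩
    have hYD : ∀ n, (Y n : ∀ j, G j) ∈ sigmaPiece G D := by
      intro n j hj
      by_contra h
      obtain ⟨k, hk⟩ := hsuppY n j h
      exact hj ⟨(n + 1, k), hk⟩
    -- coordinatewise convergence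
    have hconv : ∀ j, Filter.Tendsto (fun n => (Y n : ∀ j, G j) j) Filter.atTop
        (𝓝 ((x : ∀ j, G j) j)) := by
      intro j
      rcases Classical.em (∃ p : ℕ × ℕ, efun Y p.1 p.2 = j) with hjD | hjD
      · obtain ⟨⟨m, k⟩, hp⟩ := hjD
        rw [(hB j).1.tendsto_right_iff]
        intro i _
        filter_upwards [Filter.eventually_ge_atTop (max i (max m k))] with n hn
        have hi : i ≤ n := le_trans (le_max_left _ _) hn
        have hm : m ≤ n := le_trans (le_trans (le_max_left _ _) (le_max_right i _)) hn
        have hk' : k ≤ n := le_trans (le_trans (le_max_right _ _) (le_max_right i _)) hn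
        have hjF : j ∈ Fs Y n := hp ▸ hmemFs m k n hm hk'
        have hBn := hY1 (Fs Y n) n j hjF
        rw [← hYdef n] at hBn
        exact (hB j).antitone hi hBn
      · have h1 : (x : ∀ j, G j) j = 1 := by
          by_contra h
          obtain ⟨k, hk⟩ := hsuppx j h
          exact hjD ⟨(0, k), hk⟩
        have h2 : ∀ n, (Y n : ∀ j, G j) j = 1 := by
          intro n
          by_contra h
          obtain ⟨k, hk⟩ := hsuppY n j h
          exact hjD ⟨(n + 1, k), hk⟩
        rw [h1]
        simp only [h2]
        exact tendsto_const_nhds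
    -- derive the contradiction inside G_D
    have hopen := hU D hD
    have hx' : (⟨(x : ∀ j, G j), hxD⟩ : sigmaPiece G D)
        ∈ (Set.inclusion (sigmaPiece_subset G D hD)) ⁻¹' U := by
      show Set.inclusion (sigmaPiece_subset G D hD) ⟨(x : ∀ j, G j), hxD⟩ ∈ U
      have heq : Set.inclusion (sigmaPiece_subset G D hD) ⟨(x : ∀ j, G j), hxD⟩ = x :=
        Subtype.ext rfl
      rwa [heq]
    have hnhds := hopen.mem_nhds hx'
    have htd : Filter.Tendsto (fun n => (⟨(Y n : ∀ j, G j), hYD n⟩ : sigmaPiece G D))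
        Filter.atTop (𝓝 (⟨(x : ∀ j, G j), hxD⟩ : sigmaPiece G D)) := by
      rw [tendsto_subtype_rng]
      rw [tendsto_pi_nhds]
      exact hconv
    obtain ⟨n, hn⟩ := (htd.eventually hnhds).exists
    have heq : Set.inclusion (sigmaPiece_subset G D hD) ⟨(Y n : ∀ j, G j), hYD n⟩ = Y n :=
      Subtype.ext rfl
    rw [heq] at hn
    exact hY2 (Fs Y n) n ((hYdef n) ▸ hn)
  have htop := le_antisymm heasy hhard
  refine ⟨hunion, htop, ?_⟩
  rw [htop]
  infer_instance
end

section
/- Let (ι, ≤) be a directed preorder in which every countable subset has an upper bound, and let f : ι → ℝ be a monotone function (order preserving or order reversing). Then f is eventually constant: there exist β ∈ ι and s ∈ ℝ such that f(γ) = s for every γ ≥ β. -/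
theorem aux_eventually_constant_mono
    {ι : Type*} [Preorder ι]
    (hlong : ∀ C : Set ι, C.Countable → ∃ ub, ∀ i ∈ C, i ≤ ub)
    (f : ι → ℝ) (hf : Monotone f) :
    ∃ (β : ι) (s : ℝ), ∀ γ, β ≤ γ → f γ = s := by
  obtain ⟨i0, -⟩ := hlong ∅ Set.countable_empty
  have hne : (Set.range f).Nonempty := ⟨f i0, i0, rfl⟩
  have hbdd : BddAbove (Set.range f) := by
    by_contra h
    have h1 : ∀ n : ℕ, ∃ i, (n : ℝ) < f i := by
      intro n
      by_contra h'
      push_neg at h'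
      exact h ⟨n, by rintro x ⟨i, rfl⟩; exact h' i⟩
    choose g hg using h1
    obtain ⟨u, hu⟩ := hlong (Set.range g) (Set.countable_range g)
    obtain ⟨n, hn⟩ := exists_nat_gt (f u)
    have := lt_of_lt_of_le (hg n) (hf (hu _ ⟨n, rfl⟩))
    linarith
  set s := sSup (Set.range f) with hs
  have h2 : ∀ n : ℕ, ∃ i, s - 1 / (n + 1) < f i := by
    intro n
    have hlt : s - 1 / (n + 1) < s := by
      have : (0 : ℝ) < 1 / (n + 1) := by positivity
      linarith
    obtain ⟨x, ⟨i, rfl⟩, hx⟩ := exists_lt_of_lt_csSup hne hlt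
    exact ⟨i, hx⟩
  choose g hg using h2
  obtain ⟨u, hu⟩ := hlong (Set.range g) (Set.countable_range g)
  have hfu : f u = s := by
    have hle : f u ≤ s := le_csSup hbdd ⟨u, rfl⟩
    have hge : s ≤ f u := by
      by_contra h'
      push_neg at h'
      obtain ⟨n, hn⟩ := exists_nat_one_div_lt (sub_pos.2 h')
      have := lt_of_lt_of_le (hg n) (hf (hu _ ⟨n, rfl⟩))
      have : 1 / ((n : ℝ) + 1) < s - f u := hn
      linarith [lt_of_lt_of_le (hg n) (hf (hu _ ⟨n, rfl⟩))]
    linarith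
  refine ⟨u, s, fun γ hγ => le_antisymm (le_csSup hbdd ⟨γ, rfl⟩) (hfu ▸ hf hγ)⟩

/-- Let `(ι, ≤)` be a directed preorder in which every countable subset has
an upper bound (a long directed preorder), and let `f : ι → ℝ` be monotone (order preserving
or order reversing). Then `f` is eventually constant. -/
theorem eventually_constant_of_long_directed_monotone
    {ι : Type*} [Preorder ι] [IsDirected ι (· ≤ ·)]
    (hlong : ∀ C : Set ι, C.Countable → ∃ ub, ∀ i ∈ C, i ≤ ub)
    (f : ι → ℝ) (hf : Monotone f ∨ Antitone f) :
    ∃ (β : ι) (s : ℝ), ∀ γ, β ≤ γ → f γ = s := by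
  rcases hf with hf | hf
  · exact aux_eventually_constant_mono hlong f hf
  · obtain ⟨β, s, h⟩ := aux_eventually_constant_mono hlong (fun i => -f i)
      (fun a b hab => neg_le_neg (hf hab))
    exact ⟨β, -s, fun γ hγ => by have := h γ hγ; linarith⟩
end

section
/- Let 𝕂 be ℝ or ℂ, let (ι, ≤) be a long directed preorder, let E be a normed vector space over 𝕂, and let {E_α}_{α ∈ ι} be a monotone family of linear subspaces with union E such that each E_α is complete with respect to the restriction of the norm of E (so the inclusions E_α → E_β are isometric embeddings). Then E is a Banach space, and the norm topology on E coincides with the colimit space topology, i.e. the finest topology on E making each inclusion E_α → E continuous. -/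
open TopologicalSpace

/-- Let `𝕜` be `ℝ` or `ℂ`, `(ι, ≤)` a long directed preorder, `E` a normed
`𝕜`-vector space, and `{E_α}` a monotone family of linear subspaces with union `E` such that
each `E_α` is complete in the restriction of the norm of `E` (so all bonding inclusions are
isometric embeddings). Then `E` is a Banach space, and the norm topology on `E` coincides with
the colimit space topology, i.e. the finest topology making each inclusion `E_α → E`
continuous (the supremum of the topologies coinduced from the subspace topologies). -/
theorem banach_of_long_colimit {𝕜 : Type*} [RCLike 𝕜]
    {E : Type*} [NormedAddCommGroup E] [NormedSpace 𝕜 E]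
    {ι : Type*} [Preorder ι] [IsDirected ι (· ≤ ·)]
    (hlong : ∀ C : Set ι, C.Countable → ∃ ub, ∀ i ∈ C, i ≤ ub)
    (s : ι → Submodule 𝕜 E) (hs : Monotone s) (hsU : ∀ x : E, ∃ α, x ∈ s α)
    (hcomplete : ∀ α, IsComplete ((s α : Set E))) :
    CompleteSpace E ∧
      (⨆ α, TopologicalSpace.coinduced (Subtype.val : s α → E)
          (inferInstance : TopologicalSpace (s α)))
        = (inferInstance : TopologicalSpace E) := by
  constructor
  · refine Metric.complete_of_cauchySeq_tendsto fun u hu => ?_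
    choose α hα using fun n => hsU (u n)
    obtain ⟨β, hβ⟩ := hlong (Set.range α) (Set.countable_range α)
    have hmem : ∀ n, u n ∈ s β := fun n => hs (hβ _ (Set.mem_range_self n)) (hα n)
    obtain ⟨x, -, hx⟩ := hcomplete β _ hu
      (Filter.le_principal_iff.2 (Filter.mem_map.2 (Filter.Eventually.of_forall hmem)))
    exact ⟨x, hx⟩
  · apply le_antisymm
    · exact iSup_le fun α => continuous_iff_coinduced_le.1 continuous_subtype_val
    · rw [TopologicalSpace.le_def]
      intro U hU
      rw [isOpen_iSup_iff] at hU
      simp only [isOpen_coinduced] at hU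
      rw [isOpen_iff_mem_nhds]
      intro x hxU
      by_contra hnot
      have hxcl : x ∈ closure Uᶜ := by
        rw [mem_closure_iff_nhds]
        intro t ht
        rcases Set.not_subset.1 (fun h => hnot (Filter.mem_of_superset ht h)) with ⟨y, hyt, hyU⟩
        exact ⟨y, hyt, hyU⟩
      obtain ⟨u, huC, hulim⟩ := mem_closure_iff_seq_limit.1 hxcl
      choose α hα using fun n => hsU (u n)
      obtain ⟨γ, hγx⟩ := hsU x
      obtain ⟨β, hβ⟩ := hlong (insert γ (Set.range α)) ((Set.countable_range α).insert γ)
      have hxβ : x ∈ s β := hs (hβ γ (Set.mem_insert _ _)) hγx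
      have humem : ∀ n, u n ∈ s β := fun n =>
        hs (hβ _ (Set.mem_insert_of_mem _ (Set.mem_range_self n))) (hα n)
      have hv : Filter.Tendsto (fun n => (⟨u n, humem n⟩ : s β)) Filter.atTop (nhds ⟨x, hxβ⟩) := by
        rw [tendsto_subtype_rng]; exact hulim
      have hev := hv.eventually ((hU β).eventually_mem
        (show (⟨x, hxβ⟩ : s β) ∈ Subtype.val ⁻¹' U from hxU))
      obtain ⟨n, hn⟩ := hev.exists
      exact huC n hn
end

section
/- Let J be an uncountable set, 𝕂 = ℝ or ℂ, and 1 ≤ p < ∞. For each countable subset D ⊆ J, identify ℓ^p(D, 𝕂) with the closed subspace of ℓ^p(J, 𝕂) consisting of functions vanishing outside D. Then ℓ^p(J, 𝕂) = ⋃_{D ∈ [J]^{≤ω}} ℓ^p(D, 𝕂), and the norm topology on ℓ^p(J, 𝕂) coincides with the colimit space topology determined by the family {ℓ^p(D, 𝕂)}_{D ∈ [J]^{≤ω}}, i.e. the finest topology making each inclusion ℓ^p(D, 𝕂) → ℓ^p(J, 𝕂) continuous. -/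
open TopologicalSpace

/-- Let `J` be an uncountable set, `𝕜 = ℝ` or `ℂ`, and `1 ≤ p < ∞`. Every
element of `ℓ^p(J, 𝕜)` vanishes outside a countable set (so `ℓ^p(J, 𝕜)` is the union of the
subspaces `ℓ^p(D, 𝕜)` over countable `D ⊆ J`), and the norm topology on `ℓ^p(J, 𝕜)` coincides
with the colimit space topology determined by the family `{ℓ^p(D, 𝕜)}_{D countable}` (each
carrying the subspace topology), i.e. the finest topology making each inclusion
`ℓ^p(D, 𝕜) → ℓ^p(J, 𝕜)` continuous. -/
theorem lp_colimit_of_uncountable {J : Type*} [Uncountable J] {𝕜 : Type*} [RCLike 𝕜]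
    (p : ENNReal) [Fact (1 ≤ p)] (hp : p ≠ ⊤) :
    (∀ f : lp (fun _ : J => 𝕜) p, ∃ D : Set J, D.Countable ∧ ∀ j ∉ D, f j = 0) ∧
      (⨆ (D : Set J) (_ : D.Countable),
          TopologicalSpace.coinduced
            (Subtype.val : {f : lp (fun _ : J => 𝕜) p // ∀ j ∉ D, f j = 0}
                → lp (fun _ : J => 𝕜) p)
            (inferInstance :
              TopologicalSpace {f : lp (fun _ : J => 𝕜) p // ∀ j ∉ D, f j = 0}))
        = (inferInstance : TopologicalSpace (lp (fun _ : J => 𝕜) p)) := by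
  have h1 : (1 : ENNReal) ≤ p := Fact.out
  have hpt : 0 < p.toReal := ENNReal.toReal_pos (zero_lt_one.trans_le h1).ne' hp
  -- countable support
  have key : ∀ f : lp (fun _ : J => 𝕜) p, (Function.support fun j => f j).Countable := by
    intro f
    have hs : Summable fun j => ‖f j‖ ^ p.toReal := (lp.memℓp f).summable hpt
    refine hs.countable_support.mono ?_
    intro j hj
    simp only [Function.mem_support] at hj ⊢
    have hpos : 0 < ‖f j‖ := norm_pos_iff.mpr hj
    exact (Real.rpow_pos_of_pos hpos _).ne'
  constructor
  · exact fun f => ⟨_, key f, fun j hj => Function.notMem_support.mp hj⟩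
  refine le_antisymm (iSup₂_le fun D hD => continuous_iff_coinduced_le.mp
    continuous_subtype_val) ?_
  intro U hU
  simp only [isOpen_iSup_iff, isOpen_coinduced] at hU
  rw [Metric.isOpen_iff]
  intro f hf
  by_contra hcon
  push_neg at hcon
  have hchoice : ∀ n : ℕ, ∃ g : lp (fun _ : J => 𝕜) p,
      g ∈ Metric.ball f (1 / (n + 1)) ∧ g ∉ U := by
    intro n
    have hsub := hcon (1 / (n + 1)) (by positivity)
    obtain ⟨g, hg1, hg2⟩ := Set.not_subset.mp hsub
    exact ⟨g, hg1, hg2⟩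
  choose g hg hgU using hchoice
  set D : Set J := (Function.support fun j => f j) ∪ ⋃ n, Function.support fun j => g n j
    with hDdef
  have hD : D.Countable := (key f).union (Set.countable_iUnion fun n => key (g n))
  have hfD : ∀ j ∉ D, f j = 0 := fun j hj =>
    Function.notMem_support.mp fun h => hj (Or.inl h)
  have hgD : ∀ n, ∀ j ∉ D, g n j = 0 := fun n j hj =>
    Function.notMem_support.mp fun h => hj (Or.inr (Set.mem_iUnion.mpr ⟨n, h⟩))
  set S := {h : lp (fun _ : J => 𝕜) p // ∀ j ∉ D, h j = 0}
  have hUopen : IsOpen ((Subtype.val : S → _) ⁻¹' U) := hU D hD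
  have htend : Filter.Tendsto (fun n => (⟨g n, hgD n⟩ : S)) Filter.atTop
      (nhds (⟨f, hfD⟩ : S)) := by
    rw [tendsto_subtype_rng]
    rw [tendsto_iff_dist_tendsto_zero]
    refine squeeze_zero (fun n => dist_nonneg) (fun n => (hg n).le) ?_
    exact tendsto_one_div_add_atTop_nhds_zero_nat
  have := (htend.eventually (hUopen.mem_nhds (by exact hf))).exists
  obtain ⟨n, hn⟩ := this
  exact hgU n hn
end

section
/- Let X be a locally compact Hausdorff space that is not pseudocompact, i.e. there exists a continuous unbounded function X → ℝ. Then X contains a subset A that is regular closed (A equals the closure in X of its interior), σ-compact, and not pseudocompact (some continuous real-valued function on A is unbounded). -/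
/-- Let `X` be a locally compact Hausdorff space that is not pseudocompact,
i.e. there exists a continuous unbounded function `X → ℝ`. Then `X` contains a subset `A`
that is regular closed (`A` equals the closure of its interior), σ-compact, and not
pseudocompact (some continuous real-valued function on `A` is unbounded). -/
theorem exists_regularClosed_sigmaCompact_not_pseudocompact
    {X : Type*} [TopologicalSpace X] [T2Space X] [LocallyCompactSpace X]
    (hX : ∃ f : X → ℝ, Continuous f ∧ ¬∃ B : ℝ, ∀ x, |f x| ≤ B) :
    ∃ A : Set X, closure (interior A) = A ∧
      (∃ K : ℕ → Set X, (∀ n, IsCompact (K n)) ∧ A = ⋃ n, K n) ∧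
      ∃ g : A → ℝ, Continuous g ∧ ¬∃ B : ℝ, ∀ a : A, |g a| ≤ B := by
  obtain ⟨f, hf, hub⟩ := hX
  push_neg at hub
  choose x hx using hub
  have hopen : ∀ n : ℕ, IsOpen {y : X | (n : ℝ) < |f y|} := fun n =>
    isOpen_lt continuous_const hf.abs
  have hmem : ∀ n : ℕ, x n ∈ {y : X | (n : ℝ) < |f y|} := fun n => hx n
  choose C hC hCint hCsub using fun n => exists_compact_subset (hopen n) (hmem n)
  set U : ℕ → Set X := fun n => interior (C n) with hU
  have hUsub : ∀ n, U n ⊆ {y : X | (n : ℝ) < |f y|} := fun n =>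
    interior_subset.trans (hCsub n)
  have hlf : LocallyFinite U := by
    intro y
    refine ⟨{z | |f z| < |f y| + 1},
      (isOpen_lt hf.abs continuous_const).mem_nhds (by simp), ?_⟩
    refine (Set.finite_Iio ⌈|f y| + 1⌉₊).subset ?_
    rintro n ⟨z, hz1, hz2⟩
    have h1 : (n : ℝ) < |f z| := hUsub n hz1
    exact Nat.lt_ceil.mpr (h1.trans hz2)
  have hclC : ∀ n, closure (U n) ⊆ C n := fun n =>
    closure_minimal interior_subset (hC n).isClosed
  have hKcomp : ∀ n, IsCompact (closure (U n)) := fun n =>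
    (hC n).of_isClosed_subset isClosed_closure (hclC n)
  set A : Set X := ⋃ n, closure (U n) with hA
  have hAclosed : IsClosed A := by
    rw [hA, ← hlf.closure_iUnion]
    exact isClosed_closure
  have hUA : (⋃ n, U n) ⊆ interior A := by
    apply interior_maximal _ (isOpen_iUnion fun n => isOpen_interior)
    exact Set.iUnion_mono fun n => subset_closure
  have hreg : closure (interior A) = A := by
    apply le_antisymm
    · exact (closure_mono interior_subset).trans hAclosed.closure_subset
    · have h := closure_mono hUA
      rw [hlf.closure_iUnion] at h
      exact h
  refine ⟨A, hreg, ⟨fun n => closure (U n), hKcomp, rfl⟩, fun a => f a.1,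
    hf.comp continuous_subtype_val, ?_⟩
  rintro ⟨B, hB⟩
  have hxA : ∀ n : ℕ, x n ∈ A := fun n =>
    Set.mem_iUnion.mpr ⟨n, subset_closure (hCint n)⟩
  have := hB ⟨x ⌈B⌉₊, hxA ⌈B⌉₊⟩
  have h2 : (⌈B⌉₊ : ℝ) < |f (x ⌈B⌉₊)| := hx ⌈B⌉₊
  linarith [Nat.le_ceil B]
end

section
/- Let X be a metrizable, locally Euclidean space (every point has an open neighborhood homeomorphic to ℝⁿ for some n) with no isolated points. Then for every non-empty open subset U ⊆ X whose closure is compact, the group Homeo_{cl U}(X) of homeomorphisms of X fixing every point outside cl U, equipped with the compact-open topology, is not locally compact. -/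
open TopologicalSpace

variable (X : Type*) [TopologicalSpace X]

/-- The group of self-homeomorphisms of `X`, with `(f * g) x = f (g x)`. -/
instance : Group (Homeomorph X X) where
  mul f g := g.trans f
  one := Homeomorph.refl X
  inv := Homeomorph.symm
  mul_assoc f g h := Homeomorph.ext fun x => rfl
  one_mul f := Homeomorph.ext fun x => rfl
  mul_one f := Homeomorph.ext fun x => rfl
  inv_mul_cancel f := Homeomorph.ext fun x => f.symm_apply_apply x

@[simp] theorem homeoMul_apply (f g : Homeomorph X X) (x : X) : (f * g) x = f (g x) := rfl
@[simp] theorem homeoOne_apply (x : X) : (1 : Homeomorph X X) x = x := rfl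
@[simp] theorem homeoInv_apply (f : Homeomorph X X) (x : X) : f⁻¹ x = f.symm x := rfl

/-- The compact-open topology on the homeomorphism group of `X`, induced from the
compact-open topology on `C(X, X)`. -/
instance : TopologicalSpace (Homeomorph X X) :=
  TopologicalSpace.induced (fun h => (h : C(X, X))) ContinuousMap.compactOpen

/-- The subgroup `Homeo_K(X)` of homeomorphisms fixing every point outside `K`, with the
compact-open topology. -/
def HomeoK (K : Set X) : Subgroup (Homeomorph X X) where
  carrier := {h | ∀ x ∉ K, h x = x}
  one_mem' := fun x _ => rfl
  mul_mem' := by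
    intro a b ha hb x hx
    show a (b x) = x
    rw [hb x hx, ha x hx]
  inv_mem' := by
    intro a ha x hx
    show a.symm x = x
    conv_lhs => rw [← ha x hx]
    exact a.symm_apply_apply x

/-- The group of compactly supported homeomorphisms of `X`: those whose support
`closure {x | h x ≠ x}` is compact. -/
def HomeoCpt : Subgroup (Homeomorph X X) where
  carrier := {h | IsCompact (closure {x | h x ≠ x})}
  one_mem' := by
    show IsCompact (closure {x : X | (1 : Homeomorph X X) x ≠ x})
    have : {x : X | (1 : Homeomorph X X) x ≠ x} = ∅ := by ext x; simp
    rw [this, closure_empty]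
    exact isCompact_empty
  mul_mem' := by
    intro a b ha hb
    refine (ha.union hb).of_isClosed_subset isClosed_closure ?_
    rw [← closure_union]
    refine closure_mono fun x hx => ?_
    by_contra hc
    simp only [Set.mem_union, Set.mem_setOf_eq, not_or, not_not] at hc
    exact hx (by show a (b x) = x; rw [hc.2, hc.1])
  inv_mem' := by
    intro a ha
    have : {x | a⁻¹ x ≠ x} = {x | a x ≠ x} := by
      ext x
      simp only [Set.mem_setOf_eq, homeoInv_apply, ne_eq, not_iff_not]
      constructor
      · intro h
        exact ((congrArg (⇑a) h).symm.trans (a.apply_symm_apply x)).symm.symm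
      · intro h
        exact ((congrArg (⇑a.symm) h).symm.trans (a.symm_apply_apply x))
    show IsCompact (closure {x | a⁻¹ x ≠ x})
    rw [this]
    exact ha

theorem homeoK_le_homeoCpt [T2Space X] (K : Set X) (hK : IsCompact K) :
    HomeoK X K ≤ HomeoCpt X := by
  intro h hh
  show IsCompact (closure {x | h x ≠ x})
  refine hK.of_isClosed_subset isClosed_closure ?_
  have h1 : {x | h x ≠ x} ⊆ K := fun x hx => by
    by_contra hc
    exact hx (hh x hc)
  calc closure {x | h x ≠ x} ⊆ closure K := closure_mono h1
    _ = K := hK.isClosed.closure_eq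

/-- The colimit space topology on the group of compactly supported homeomorphisms: the finest
topology making each inclusion `Homeo_K(X) → ⋃_K Homeo_K(X)` continuous. -/
def homeoColimTop [T2Space X] : TopologicalSpace (HomeoCpt X) :=
  ⨆ (K : Set X) (hK : IsCompact K),
    TopologicalSpace.coinduced (Subgroup.inclusion (homeoK_le_homeoCpt X K hK))
      inferInstance

section AuxHomeo

open Set Metric Filter

theorem exists_extend_homeo {X : Type*} [TopologicalSpace X] [T2Space X]
    {E : Type*} [TopologicalSpace E] (V : Set X) (hV : IsOpen V)
    (e : V ≃ₜ E) (g₀ : E ≃ₜ E) (B : Set E) (hB : IsCompact B)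
    (hg : ∀ y ∉ B, g₀ y = y) (hmaps : Set.MapsTo g₀ B B) :
    ∃ g : X ≃ₜ X, (∀ y : E, g ((e.symm y : V) : X) = ((e.symm (g₀ y) : V) : X)) ∧
      (∀ x ∉ (fun y : E => ((e.symm y : V) : X)) '' B, g x = x) := by
  classical
  set j : E → X := fun y => ((e.symm y : V) : X) with hj_def
  have hj : Continuous j := continuous_subtype_val.comp e.symm.continuous
  have hjV : ∀ y, j y ∈ V := fun y => (e.symm y).2
  have hje : ∀ y, e ⟨j y, hjV y⟩ = y := by
    intro y
    have h : (⟨j y, hjV y⟩ : V) = e.symm y := Subtype.ext rfl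
    rw [h, e.apply_symm_apply]
  set K : Set X := j '' B with hK_def
  have hKV : K ⊆ V := by rintro _ ⟨y, -, rfl⟩; exact hjV y
  have hKclosed : IsClosed K := (hB.image hj).isClosed
  have hg' : ∀ y ∉ B, g₀.symm y = y := by
    intro y hy
    by_cases hz : g₀.symm y ∈ B
    · exact absurd (g₀.apply_symm_apply y ▸ hmaps hz) hy
    · exact ((hg _ hz).symm.trans (g₀.apply_symm_apply y))
  set F : (E → E) → X → X := fun k x => if hx : x ∈ V then j (k (e ⟨x, hx⟩)) else x with hF_def
  have hFid : ∀ (k : E → E), (∀ y ∉ B, k y = y) → ∀ x ∉ K, F k x = x := by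
    intro k hk x hx
    by_cases hxV : x ∈ V
    · have hxB : e ⟨x, hxV⟩ ∉ B := by
        intro hmem
        refine hx ⟨e ⟨x, hxV⟩, hmem, ?_⟩
        show ((e.symm (e ⟨x, hxV⟩) : V) : X) = x
        rw [e.symm_apply_apply]
      simp only [F, dif_pos hxV, hk _ hxB]
      show ((e.symm (e ⟨x, hxV⟩) : V) : X) = x
      rw [e.symm_apply_apply]
    · simp only [F, dif_neg hxV]
  have hFcont : ∀ (k : E → E), Continuous k → (∀ y ∉ B, k y = y) → Continuous (F k) := by
    intro k hkc hk
    rw [continuous_iff_continuousAt]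
    intro x
    by_cases hxV : x ∈ V
    · have hco : ContinuousOn (F k) V := by
        rw [continuousOn_iff_continuous_restrict]
        have hres : V.domRestrict (F k) = fun v : V => j (k (e v)) := by
          funext v
          simp only [Set.domRestrict, F]
          rw [dif_pos v.2]
        rw [hres]
        exact hj.comp (hkc.comp e.continuous)
      exact hco.continuousAt (hV.mem_nhds hxV)
    · have hxK : x ∈ Kᶜ := fun hmem => hxV (hKV hmem)
      have hco : ContinuousOn (F k) Kᶜ := continuousOn_id.congr (fun y hy => hFid k hk y hy)
      exact hco.continuousAt (hKclosed.isOpen_compl.mem_nhds hxK)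
  have hFinv : ∀ (k k' : E → E), (∀ y, k' (k y) = y) → Function.LeftInverse (F k') (F k) := by
    intro k k' hkk' x
    by_cases hxV : x ∈ V
    · simp only [F, dif_pos hxV]
      rw [dif_pos (hjV (k (e ⟨x, hxV⟩)))]
      rw [hje, hkk']
      show ((e.symm (e ⟨x, hxV⟩) : V) : X) = x
      rw [e.symm_apply_apply]
    · simp only [F, dif_neg hxV]
  refine ⟨⟨⟨F g₀, F g₀.symm, hFinv g₀ g₀.symm g₀.symm_apply_apply,
      hFinv g₀.symm g₀ g₀.apply_symm_apply⟩,
      hFcont g₀ g₀.continuous hg, hFcont g₀.symm g₀.symm.continuous hg'⟩, ?_, ?_⟩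
  · intro y
    show F g₀ (j y) = j (g₀ y)
    simp only [F, dif_pos (hjV y)]
    rw [hje]
  · intro x hx
    exact hFid g₀ hg x hx

theorem exists_push_homeo {E : Type*} [NormedAddCommGroup E] [NormedSpace ℝ E] [CompleteSpace E]
    (c₀ u : E) (hu : ‖u‖ = 1) (r : ℝ) (hr : 0 < r) :
    ∃ g₀ : E ≃ₜ E, (∀ y ∉ Metric.closedBall c₀ r, g₀ y = y) ∧
      Set.MapsTo g₀ (Metric.closedBall c₀ r) (Metric.closedBall c₀ r) ∧
      ∀ s ∈ Set.Icc (0:ℝ) r, g₀ (c₀ + s • u) = c₀ + ((s + r) / 2) • u := by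
  have hnt : Nontrivial E := nontrivial_of_ne u 0 (by
    intro h; rw [h, norm_zero] at hu; linarith)
  set φ : E → ℝ := fun x => (1/2) * max (r - ‖x - c₀‖) 0 with hφ_def
  set f : E → E := fun x => x + φ x • u with hf_def
  have hALO : ApproximatesLinearOn f
      ((ContinuousLinearEquiv.refl ℝ E : E ≃L[ℝ] E) : E →L[ℝ] E) Set.univ (1/2 : NNReal) := by
    intro x _ y _
    have h1 : f x - f y - (ContinuousLinearEquiv.refl ℝ E : E →L[ℝ] E) (x - y)
        = (φ x - φ y) • u := by
      simp only [f, ContinuousLinearEquiv.coe_refl, ContinuousLinearMap.coe_id', id_eq, sub_smul]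
      abel
    rw [h1, norm_smul, Real.norm_eq_abs, hu, mul_one]
    have h3 : |(r - ‖x - c₀‖) - (r - ‖y - c₀‖)| ≤ ‖x - y‖ := by
      have h5 := abs_norm_sub_norm_le (x - c₀) (y - c₀)
      have h4 : x - c₀ - (y - c₀) = x - y := by abel
      rw [h4] at h5
      calc |(r - ‖x - c₀‖) - (r - ‖y - c₀‖)| = |‖x - c₀‖ - ‖y - c₀‖| := by
            rw [abs_sub_comm]; ring_nf
        _ ≤ ‖x - y‖ := h5
    have h6 := abs_max_sub_max_le_abs (r - ‖x - c₀‖) (r - ‖y - c₀‖) 0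
    have h2 : |φ x - φ y| ≤ (1/2) * ‖x - y‖ := by
      have h7 : |φ x - φ y| = (1/2) * |max (r - ‖x - c₀‖) 0 - max (r - ‖y - c₀‖) 0| := by
        simp only [φ]
        rw [← mul_sub, abs_mul]
        norm_num
      rw [h7]
      nlinarith [h6, h3]
    have h8 : ((1/2 : NNReal) : ℝ) = 1/2 := by norm_num
    rw [h8]
    exact h2
  have hc : Subsingleton E ∨ (1/2 : NNReal)
      < ‖(((ContinuousLinearEquiv.refl ℝ E).symm : E ≃L[ℝ] E) : E →L[ℝ] E)‖₊⁻¹ := by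
    right
    have h9 : (((ContinuousLinearEquiv.refl ℝ E).symm : E ≃L[ℝ] E) : E →L[ℝ] E)
        = ContinuousLinearMap.id ℝ E := rfl
    rw [h9, ContinuousLinearMap.nnnorm_id]
    rw [← NNReal.coe_lt_coe]
    push_cast
    norm_num
  set g₀ : E ≃ₜ E := hALO.toHomeomorph f hc with hg₀_def
  have hg₀_apply : ∀ y, g₀ y = f y := fun y => rfl
  have hmax_out : ∀ y ∉ Metric.closedBall c₀ r, φ y = 0 := by
    intro y hy
    rw [Metric.mem_closedBall, dist_eq_norm, not_le] at hy
    simp only [φ]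
    rw [max_eq_right (by linarith)]
    ring
  have hmax_in : ∀ y ∈ Metric.closedBall c₀ r, φ y = (1/2) * (r - ‖y - c₀‖) := by
    intro y hy
    rw [Metric.mem_closedBall, dist_eq_norm] at hy
    simp only [φ]
    rw [max_eq_left (by linarith)]
  refine ⟨g₀, ?_, ?_, ?_⟩
  · intro y hy
    rw [hg₀_apply, hf_def]
    simp [hmax_out y hy]
  · intro y hy
    rw [Metric.mem_closedBall, dist_eq_norm] at hy ⊢
    rw [hg₀_apply]
    have h1 : f y - c₀ = (y - c₀) + φ y • u := by simp only [f]; abel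
    have h2 : ‖f y - c₀‖ ≤ ‖y - c₀‖ + |φ y| := by
      rw [h1]
      calc ‖(y - c₀) + φ y • u‖ ≤ ‖y - c₀‖ + ‖φ y • u‖ := norm_add_le _ _
        _ = ‖y - c₀‖ + |φ y| := by rw [norm_smul, Real.norm_eq_abs, hu, mul_one]
    have h3 : φ y = (1/2) * (r - ‖y - c₀‖) := hmax_in y (by rw [Metric.mem_closedBall, dist_eq_norm]; exact hy)
    have h4 : |φ y| = (1/2) * (r - ‖y - c₀‖) := by
      rw [h3, abs_of_nonneg]; nlinarith
    nlinarith
  · intro s hs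
    rw [hg₀_apply]
    have h0 : ‖(c₀ + s • u) - c₀‖ = s := by
      rw [add_sub_cancel_left, norm_smul, Real.norm_eq_abs, hu, mul_one, abs_of_nonneg hs.1]
    have h1 : φ (c₀ + s • u) = (1/2) * (r - s) := by
      simp only [φ]
      rw [h0, max_eq_left (by linarith [hs.2])]
    show (c₀ + s • u) + φ (c₀ + s • u) • u = c₀ + ((s + r) / 2) • u
    rw [h1, add_assoc, ← add_smul]
    congr 1
    · ring_nf

end AuxHomeo

open Filter Topology

/-- Let `X` be a metrizable, locally Euclidean space (every point has an
open neighborhood homeomorphic to some `ℝⁿ`) with no isolated points. Then for every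
non-empty open `U ⊆ X` with compact closure, the group `Homeo_{cl U}(X)` of homeomorphisms of
`X` fixing every point outside `cl U`, with the compact-open topology, is not locally
compact. -/
theorem homeoClosure_not_locallyCompact [MetrizableSpace X]
    (heucl : ∀ x : X, ∃ (n : ℕ) (U : Set X), IsOpen U ∧ x ∈ U ∧
      Nonempty (U ≃ₜ (Fin n → ℝ)))
    (hni : ∀ x : X, (nhdsWithin x {x}ᶜ).NeBot) :
    ∀ U : Set X, IsOpen U → U.Nonempty → IsCompact (closure U) →
      ¬LocallyCompactSpace (HomeoK X (closure U)) := by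
  intro U hUopen hUne hUcl hLC
  letI : MetricSpace X := TopologicalSpace.metrizableSpaceMetric X
  haveI := hLC
  obtain ⟨C, hCcpt, hCnhds⟩ := exists_compact_mem_nhds (1 : HomeoK X (closure U))
  -- unravel the neighborhood down to `C(X, X)`
  have h1 : 𝓝 (1 : HomeoK X (closure U))
      = Filter.comap Subtype.val (𝓝 (1 : Homeomorph X X)) := nhds_induced _ _
  have h2 : 𝓝 (1 : Homeomorph X X)
      = Filter.comap (fun h : Homeomorph X X => (h : C(X, X)))
        (𝓝 ((1 : Homeomorph X X) : C(X, X))) := nhds_induced _ _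
  rw [h2, Filter.comap_comap] at h1
  rw [h1] at hCnhds
  obtain ⟨N, hN, hNsub⟩ := Filter.mem_comap.mp hCnhds
  obtain ⟨Vent, hVent, hball⟩ := UniformSpace.mem_nhds_iff.mp hN
  obtain ⟨K, W, hKcpt, hW, hWsub⟩ := (ContinuousMap.mem_compactConvergence_entourage_iff _).mp hVent
  obtain ⟨ε, hε, hWε⟩ := Metric.mem_uniformity_dist.mp hW
  have hKey : ∀ (h : Homeomorph X X) (hmem : h ∈ HomeoK X (closure U)),
      (∀ x, dist (h x) x < ε) → (⟨h, hmem⟩ : HomeoK X (closure U)) ∈ C := by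
    intro h hmem hd
    apply hNsub
    show (h : C(X, X)) ∈ N
    apply hball
    show (((1 : Homeomorph X X) : C(X, X)), (h : C(X, X))) ∈ Vent
    apply hWsub
    intro x _
    apply hWε
    show dist (((1 : Homeomorph X X) : C(X, X)) x) ((h : C(X, X)) x) < ε
    have hid : (((1 : Homeomorph X X) : C(X, X)) x) = x := rfl
    rw [hid, dist_comm]
    exact hd x
  obtain ⟨p, hpU⟩ := hUne
  obtain ⟨n, V, hVo, hpV, ⟨e⟩⟩ := heucl p
  -- the chart dimension is positive, since `p` is not isolated
  have hne : Nonempty (Fin n) := by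
    by_contra hempty
    haveI : IsEmpty (Fin n) := not_nonempty_iff.mp hempty
    haveI : Subsingleton (Fin n → ℝ) := ⟨fun a b => funext fun i => (IsEmpty.false i).elim⟩
    haveI hVs : Subsingleton V := e.toEquiv.subsingleton
    have hsub : V ⊆ {p} := by
      intro x hx
      show x ∈ ({p} : Set X)
      rw [Set.mem_singleton_iff]
      have hxp : (⟨x, hx⟩ : V) = ⟨p, hpV⟩ := Subsingleton.elim _ _
      exact congrArg Subtype.val hxp
    have hp_nhds : {p} ∈ 𝓝 p := Filter.mem_of_superset (hVo.mem_nhds hpV) hsub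
    have hcap : {p} ∩ {p}ᶜ ∈ nhdsWithin p {p}ᶜ :=
      Filter.inter_mem (mem_nhdsWithin_of_mem_nhds hp_nhds) self_mem_nhdsWithin
    rw [Set.inter_compl_self] at hcap
    exact (hni p).ne (Filter.empty_mem_iff_bot.mp hcap)
  haveI := hne
  set u : Fin n → ℝ := fun _ => 1 with hu_def
  have hu : ‖u‖ = 1 := by rw [pi_norm_const]; exact norm_one
  set j : (Fin n → ℝ) → X := fun y => ((e.symm y : V) : X) with hj_def
  have hjc : Continuous j := continuous_subtype_val.comp e.symm.continuous
  have hjinj : Function.Injective j := Subtype.val_injective.comp e.symm.injective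
  set c₀ := e ⟨p, hpV⟩ with hc₀_def
  have hjc₀ : j c₀ = p := by
    show ((e.symm (e ⟨p, hpV⟩) : V) : X) = p
    rw [e.symm_apply_apply]
  have hO : IsOpen (j ⁻¹' (U ∩ Metric.ball p (ε / 2))) :=
    (hUopen.inter Metric.isOpen_ball).preimage hjc
  have hc₀O : c₀ ∈ j ⁻¹' (U ∩ Metric.ball p (ε / 2)) := by
    rw [Set.mem_preimage, hjc₀]
    exact ⟨hpU, Metric.mem_ball_self (by linarith)⟩
  obtain ⟨r, hr, hrsub⟩ := Metric.nhds_basis_closedBall.mem_iff.mp (hO.mem_nhds hc₀O)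
  obtain ⟨g₀, hg₀out, hg₀maps, hg₀axis⟩ := exists_push_homeo c₀ u hu r hr
  obtain ⟨g, hgj, hgout⟩ := exists_extend_homeo V hVo e g₀ (Metric.closedBall c₀ r)
    (isCompact_closedBall c₀ r) hg₀out hg₀maps
  have hBd : (fun y => ((e.symm y : V) : X)) '' Metric.closedBall c₀ r
      ⊆ U ∩ Metric.ball p (ε / 2) := Set.image_subset_iff.mpr hrsub
  have hgmem : ∀ k : ℕ, g ^ k ∈ HomeoK X (closure U) := by
    have hg1 : g ∈ HomeoK X (closure U) := by
      show ∀ x ∉ closure U, g x = x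
      intro x hx
      exact hgout x fun hmem => hx (subset_closure (hBd hmem).1)
    intro k
    exact pow_mem hg1 k
  set pt : ℝ → X := fun s => j (c₀ + s • u) with hpt_def
  have hpt_cont : Continuous pt :=
    hjc.comp (continuous_const.add (continuous_id.smul continuous_const))
  have hstep : ∀ s ∈ Set.Icc (0:ℝ) r, g (pt s) = pt ((s + r) / 2) := by
    intro s hs
    show g (j (c₀ + s • u)) = j (c₀ + ((s + r) / 2) • u)
    rw [show g (j (c₀ + s • u)) = j (g₀ (c₀ + s • u)) from hgj (c₀ + s • u),
      hg₀axis s hs]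
  have hiter : ∀ t ∈ Set.Icc (0:ℝ) r, ∀ k : ℕ,
      (g ^ k) (pt t) = pt (r - (r - t) / 2 ^ k) := by
    intro t ht k
    induction k with
    | zero =>
      rw [pow_zero, homeoOne_apply]
      congr 1
      norm_num
    | succ k ih =>
      have hmem : r - (r - t) / 2 ^ k ∈ Set.Icc (0:ℝ) r := by
        have hpow : (1:ℝ) ≤ 2 ^ k := one_le_pow₀ (by norm_num)
        constructor
        · have hle : (r - t) / 2 ^ k ≤ r - t :=
            div_le_self (by linarith [ht.2]) hpow
          linarith [ht.1]
        · have hnn : 0 ≤ (r - t) / 2 ^ k := div_nonneg (by linarith [ht.2]) (by positivity)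
          linarith
      rw [pow_succ', homeoMul_apply, ih, hstep _ hmem]
      congr 1
      have h2k : (2:ℝ) ^ k ≠ 0 := by positivity
      field_simp
      ring
  have hlim : ∀ t ∈ Set.Icc (0:ℝ) r,
      Filter.Tendsto (fun k : ℕ => (g ^ k) (pt t)) Filter.atTop (𝓝 (pt r)) := by
    intro t ht
    have h2 : Filter.Tendsto (fun k : ℕ => (1 / 2 : ℝ) ^ k) Filter.atTop (𝓝 0) :=
      tendsto_pow_atTop_nhds_zero_of_lt_one (by norm_num) (by norm_num)
    have h4 : Filter.Tendsto (fun k : ℕ => (r - t) * (1 / 2 : ℝ) ^ k) Filter.atTop (𝓝 0) := by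
      simpa using h2.const_mul (r - t)
    have h5 : Filter.Tendsto (fun k : ℕ => r - (r - t) * (1 / 2 : ℝ) ^ k)
        Filter.atTop (𝓝 (r - 0)) := tendsto_const_nhds.sub h4
    have h3 : Filter.Tendsto (fun k : ℕ => r - (r - t) / 2 ^ k) Filter.atTop (𝓝 r) := by
      have hfe : (fun k : ℕ => r - (r - t) / 2 ^ k)
          = fun k : ℕ => r - (r - t) * (1 / 2 : ℝ) ^ k := by
        funext k
        rw [div_pow, one_pow, div_eq_mul_inv, div_eq_mul_inv, one_mul]
      rw [hfe]
      simpa using h5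
    have h6 := (hpt_cont.tendsto r).comp h3
    have h7 : (fun k : ℕ => (g ^ k) (pt t)) = fun k => pt (r - (r - t) / 2 ^ k) :=
      funext fun k => hiter t ht k
    rw [h7]
    exact h6
  have hinB : ∀ k : ℕ, ∀ y ∈ Metric.closedBall c₀ r,
      ∃ y' ∈ Metric.closedBall c₀ r, (g ^ k) (j y) = j y' := by
    intro k
    induction k with
    | zero =>
      intro y hy
      exact ⟨y, hy, by rw [pow_zero, homeoOne_apply]⟩
    | succ k ih =>
      intro y hy
      obtain ⟨y', hy', heq⟩ := ih y hy
      refine ⟨g₀ y', hg₀maps hy', ?_⟩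
      rw [pow_succ', homeoMul_apply, heq]
      exact hgj y'
  have hdisp : ∀ k : ℕ, ∀ x : X, dist ((g ^ k) x) x < ε := by
    intro k x
    by_cases hx : x ∈ (fun y => ((e.symm y : V) : X)) '' Metric.closedBall c₀ r
    · obtain ⟨y, hy, rfl⟩ := hx
      obtain ⟨y', hy', heq⟩ := hinB k y hy
      have hgoal : dist ((g ^ k) (j y)) (j y) < ε := by
        rw [heq]
        have hb1 : j y ∈ Metric.ball p (ε / 2) := (hBd ⟨y, hy, rfl⟩).2
        have hb2 : j y' ∈ Metric.ball p (ε / 2) := (hBd ⟨y', hy', rfl⟩).2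
        calc dist (j y') (j y) ≤ dist (j y') p + dist p (j y) := dist_triangle _ _ _
          _ < ε / 2 + ε / 2 :=
            add_lt_add (Metric.mem_ball.mp hb2) (by rw [dist_comm]; exact Metric.mem_ball.mp hb1)
          _ = ε := by ring
      exact hgoal
    · have hfix : ∀ m : ℕ, (g ^ m) x = x := by
        intro m
        induction m with
        | zero => rw [pow_zero, homeoOne_apply]
        | succ m ih => rw [pow_succ', homeoMul_apply, ih, hgout x hx]
      rw [hfix k, dist_self]
      exact hε
  set seq : ℕ → HomeoK X (closure U) := fun k => ⟨g ^ k, hgmem k⟩ with hseq_def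
  have hseqC : ∀ k, seq k ∈ C := fun k => hKey (g ^ k) (hgmem k) (hdisp k)
  have hFle : Filter.map seq Filter.atTop ≤ Filter.principal C :=
    Filter.le_principal_iff.mpr (Filter.mem_map.mpr (Filter.univ_mem' hseqC))
  haveI : (Filter.map seq Filter.atTop).NeBot := Filter.map_neBot
  obtain ⟨h, hhC, hcl⟩ := hCcpt.exists_clusterPt hFle
  have hev : ∀ x₀ : X, Continuous
      (fun h' : HomeoK X (closure U) => (h' : Homeomorph X X) x₀) := by
    intro x₀
    have hc1 : Continuous (fun h' : Homeomorph X X => (h' : C(X, X))) := continuous_induced_dom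
    exact ((continuous_eval_const x₀).comp hc1).comp continuous_subtype_val
  have hfix : ∀ t ∈ Set.Icc (0:ℝ) r, (h : Homeomorph X X) (pt t) = pt r := by
    intro t ht
    have htend : Filter.Tendsto (fun h' : HomeoK X (closure U) => (h' : Homeomorph X X) (pt t))
        (Filter.map seq Filter.atTop) (𝓝 (pt r)) := by
      rw [Filter.tendsto_map'_iff]
      exact hlim t ht
    have hclx := hcl.map (hev (pt t)).continuousAt htend
    exact eq_of_nhds_neBot hclx
  have h0mem : (0:ℝ) ∈ Set.Icc (0:ℝ) r := ⟨le_refl 0, le_of_lt hr⟩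
  have hhalfmem : r / 2 ∈ Set.Icc (0:ℝ) r := ⟨by positivity, by linarith⟩
  have hpteq : pt 0 = pt (r / 2) :=
    (h : Homeomorph X X).injective ((hfix 0 h0mem).trans (hfix (r / 2) hhalfmem).symm)
  have hceq : c₀ + (0:ℝ) • u = c₀ + (r / 2) • u := hjinj hpteq
  have hsmul : (0:ℝ) • u = (r / 2) • u := add_left_cancel hceq
  have hval := congrFun hsmul hne.some
  simp only [Pi.smul_apply, hu_def, smul_eq_mul, mul_one, zero_smul, Pi.zero_apply] at hval
  linarith [hval]
end
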